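/- For every s ∈ J(n,q) there exists a unique polynomial P_s ∈ F[x_1,...,x_n] of degree q − 1 that is an F-linear combination of monomials of degree at most q − 1, with P_s(s) = 1 and P_s(w) = 0 for all w ∈ J(n,q), w ≠ s. Moreover, no polynomial of degree less than q − 1 has these interpolation values. -/

import Mathlib

open Finset Polynomial


lemma lag_coeff_sum {F : Type*} [Field F] {q : ℕ} (i : Fin q → F) (hi : Function.Injective i)
    (T : Finset (Fin q)) (k : ℕ) (hk : k < T.card) :
    ∑ u ∈ T, (i u)^k * ∏ v ∈ T.erase u, (i u - i v)⁻¹ =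
      if k = T.card - 1 then 1 else 0 := by
  have hbasis : ∀ u ∈ T, (Lagrange.basis T i u).coeff (T.card - 1) =
      ∏ v ∈ T.erase u, (i u - i v)⁻¹ := by
    intro u hu
    have : Lagrange.basis T i u =
        C (∏ v ∈ T.erase u, (i u - i v)⁻¹) * ∏ v ∈ T.erase u, (X - C (i v)) := by
      rw [Lagrange.basis]
      simp_rw [Lagrange.basisDivisor]
      rw [Finset.prod_mul_distrib, map_prod]
    rw [this, coeff_C_mul]
    have hmonic : (∏ v ∈ T.erase u, (X - C (i v))).Monic :=
      monic_prod_of_monic _ _ fun v _ => monic_X_sub_C _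
    have hdeg : (∏ v ∈ T.erase u, (X - C (i v))).natDegree = T.card - 1 := by
      rw [natDegree_prod_of_monic _ _ fun v _ => monic_X_sub_C _]
      simp [Finset.card_erase_of_mem hu]
    rw [← hdeg, hmonic.coeff_natDegree, mul_one]
  have hinj : Set.InjOn i T := fun a _ b _ h => hi h
  have hdlt : ((X : F[X])^k).degree < T.card := by
    rw [degree_X_pow]; exact_mod_cast hk
  have h := Lagrange.eq_interpolate (f := (X : F[X])^k) hinj hdlt
  have h2 := congrArg (fun p => Polynomial.coeff p (T.card - 1)) h
  simp only [Lagrange.interpolate_apply, finset_sum_coeff, coeff_C_mul, eval_pow, eval_X,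
    coeff_X_pow] at h2
  rw [Finset.sum_congr rfl fun u hu => by rw [hbasis u hu]] at h2
  rw [← h2]
  simp [eq_comm]
open Finset Polynomial MvPolynomial

noncomputable section

variable {F : Type*} [Field F] {q n : ℕ}

/-- normalization constants -/
def nodeC (i : Fin q → F) (T : Finset (Fin q)) (u : Fin q) : F :=
  ∏ v ∈ T.erase u, (i u - i v)⁻¹

lemma nodeC_ne_zero (i : Fin q → F) (hi : Function.Injective i) (T : Finset (Fin q)) (u : Fin q) :
    nodeC i T u ≠ 0 := by
  rw [nodeC]
  refine Finset.prod_ne_zero_iff.2 fun v hv => ?_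
  have : u ≠ v := fun h => (Finset.mem_erase.1 hv).1 h.symm
  exact inv_ne_zero (sub_ne_zero.2 fun h => this (hi h))

/-- divided-difference constants -/
def ddc (i : Fin q → F) (T : Finset (Fin q)) (k : ℕ) : F :=
  ∑ u ∈ T, (i u)^k * nodeC i T u

/-- the divided difference of `P` in the first variable over nodes `i '' Icc a b` -/
def ddR (i : Fin q → F) (a b : Fin q) (P : MvPolynomial (Fin (n+1)) F) :
    MvPolynomial (Fin n) F :=
  ∑ u ∈ Finset.Icc a b, MvPolynomial.C (nodeC i (Finset.Icc a b) u) *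
    Polynomial.eval (MvPolynomial.C (i u)) (MvPolynomial.finSuccEquiv F n P)

lemma ddR_eval (i : Fin q → F) (a b : Fin q) (P : MvPolynomial (Fin (n+1)) F)
    (g : Fin n → F) :
    MvPolynomial.eval g (ddR i a b P) =
      ∑ u ∈ Finset.Icc a b, nodeC i (Finset.Icc a b) u *
        MvPolynomial.eval (Fin.cons (i u) g) P := by
  rw [ddR, map_sum]
  refine Finset.sum_congr rfl fun u _ => ?_
  rw [map_mul, MvPolynomial.eval_C]
  congr 1
  rw [MvPolynomial.eval_eq_eval_mv_eval']
  show (MvPolynomial.eval g : MvPolynomial (Fin n) F →+* F)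
      (Polynomial.eval (MvPolynomial.C (i u)) (finSuccEquiv F n P)) = _
  rw [Polynomial.eval, Polynomial.hom_eval₂, Polynomial.eval₂_eq_eval_map]
  simp

lemma ddR_repr (i : Fin q → F) (a b : Fin q) (P : MvPolynomial (Fin (n+1)) F) :
    ddR i a b P = ∑ k ∈ Finset.range ((finSuccEquiv F n P).natDegree + 1),
      MvPolynomial.C (ddc i (Finset.Icc a b) k) * (finSuccEquiv F n P).coeff k := by
  rw [ddR]
  have : ∀ u, Polynomial.eval (MvPolynomial.C (i u)) (finSuccEquiv F n P) =
      ∑ k ∈ Finset.range ((finSuccEquiv F n P).natDegree + 1),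
        (finSuccEquiv F n P).coeff k * (MvPolynomial.C (i u))^k :=
    fun u => Polynomial.eval_eq_sum_range _
  simp_rw [this, Finset.mul_sum]
  rw [Finset.sum_comm]
  refine Finset.sum_congr rfl fun k _ => ?_
  rw [ddc, map_sum, Finset.sum_mul]
  refine Finset.sum_congr rfl fun u _ => ?_
  rw [map_mul, map_pow]
  ring

lemma ddR_dd_zero (i : Fin q → F) (hi : Function.Injective i) (T : Finset (Fin q)) (k : ℕ)
    (hk : k < T.card - 1) : ddc i T k = 0 := by
  have := lag_coeff_sum i hi T k (by omega)
  rw [ddc]; simp_rw [nodeC]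
  rw [this, if_neg (by omega)]

lemma ddR_dd_one (i : Fin q → F) (hi : Function.Injective i) (T : Finset (Fin q))
    (hT : T.Nonempty) : ddc i T (T.card - 1) = 1 := by
  have hc : 0 < T.card := Finset.card_pos.2 hT
  have := lag_coeff_sum i hi T (T.card - 1) (by omega)
  rw [ddc]; simp_rw [nodeC]
  rw [this, if_pos rfl]

end
noncomputable section
variable {F : Type*} [Field F] {q n : ℕ}

lemma ddR_totalDegree_le (i : Fin q → F) (hi : Function.Injective i) (a b : Fin q)
    (P : MvPolynomial (Fin (n+1)) F) :
    (ddR i a b P).totalDegree ≤ P.totalDegree - ((Finset.Icc a b).card - 1) := by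
  rw [ddR_repr]
  refine MvPolynomial.totalDegree_finsetSum_le fun k _ => ?_
  rcases lt_or_ge k ((Finset.Icc a b).card - 1) with h | h
  · rw [ddR_dd_zero i hi _ _ h]; simp
  · by_cases hc : (MvPolynomial.finSuccEquiv F n P).coeff k = 0
    · rw [hc, mul_zero]; simp
    · calc (MvPolynomial.C (ddc i (Finset.Icc a b) k) *
            (MvPolynomial.finSuccEquiv F n P).coeff k).totalDegree
          ≤ _ + _ := MvPolynomial.totalDegree_mul _ _
        _ ≤ ((MvPolynomial.finSuccEquiv F n P).coeff k).totalDegree := by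
            simp [MvPolynomial.totalDegree_C]
        _ ≤ P.totalDegree - ((Finset.Icc a b).card - 1) := by
            have := MvPolynomial.totalDegree_coeff_finSuccEquiv_add_le P k hc
            omega

lemma ddR_ne_zero_card_le (i : Fin q → F) (hi : Function.Injective i) (a b : Fin q)
    (P : MvPolynomial (Fin (n+1)) F) (h : ddR i a b P ≠ 0) :
    (Finset.Icc a b).card - 1 ≤ P.totalDegree := by
  by_contra hlt
  push_neg at hlt
  apply h
  rw [ddR_repr]
  refine Finset.sum_eq_zero fun k hk => ?_
  have hk' : k ≤ (MvPolynomial.finSuccEquiv F n P).natDegree := by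
    simpa using Finset.mem_range_succ_iff.1 hk
  have : k < (Finset.Icc a b).card - 1 := by
    have h1 := MvPolynomial.natDegree_finSuccEquiv P
    have h2 := MvPolynomial.degreeOf_le_totalDegree P 0
    omega
  rw [ddR_dd_zero i hi _ _ this]
  simp
end
section
variable {F : Type*} [Field F] {q : ℕ}

lemma mono_cons {n : ℕ} (u : Fin q) (w : Fin n → Fin q) (hw : Monotone w)
    (h : ∀ j, u ≤ w j) : Monotone (Fin.cons u w) := by
  intro x y hxy
  rcases Fin.eq_zero_or_eq_succ x with rfl | ⟨jx, rfl⟩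
  · rcases Fin.eq_zero_or_eq_succ y with rfl | ⟨jy, rfl⟩
    · exact le_refl _
    · simpa using h jy
  · rcases Fin.eq_zero_or_eq_succ y with rfl | ⟨jy, rfl⟩
    · exact absurd (Fin.le_zero_iff.1 hxy) (Fin.succ_ne_zero jx)
    · simpa using hw (Fin.succ_le_succ_iff.1 hxy)

end
section
variable {F : Type*} [Field F] {q : ℕ}

lemma interp_unique (i : Fin q → F) (hi : Function.Injective i) :
    ∀ (n : ℕ) (a b : Fin q), a ≤ b → ∀ P : MvPolynomial (Fin n) F,
      P.totalDegree ≤ (b : ℕ) - (a : ℕ) →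
      (∀ w : Fin n → Fin q, Monotone w → (∀ j, a ≤ w j ∧ w j ≤ b) →
        MvPolynomial.eval (fun j => i (w j)) P = 0) → P = 0 := by
  intro n
  induction n with
  | zero =>
    intro a b hab P _ hvan
    obtain ⟨c, rfl⟩ := MvPolynomial.C_surjective (Fin 0) P
    have := hvan (fun j => j.elim0) (fun x => x.elim0) (fun j => j.elim0)
    rw [MvPolynomial.eval_C] at this
    rw [this, map_zero]
  | succ n IH =>
    intro a b hab P hdeg hvan
    set Q := MvPolynomial.finSuccEquiv F n P with hQ
    have key : ∀ (m k : ℕ), (b : ℕ) - a + 1 - m ≤ k → Q.coeff k = 0 := by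
      intro m
      induction m with
      | zero =>
        intro k hk
        by_contra hc
        have := MvPolynomial.totalDegree_coeff_finSuccEquiv_add_le P k hc
        omega
      | succ m IHm =>
        intro k hk
        rcases le_or_gt ((b : ℕ) - a + 1 - m) k with h | h
        · exact IHm k h
        have hk' : k = (b : ℕ) - a - m ∧ m ≤ (b : ℕ) - a := by omega
        have hMlt : (a : ℕ) + k < q := by
          have := b.isLt; omega
        set M : Fin q := ⟨a + k, hMlt⟩ with hM
        have haM : a ≤ M := by
          rw [Fin.le_def]; simp [hM]
        have hMb : M ≤ b := by
          rw [Fin.le_def]; simp [hM]; omega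
        have hMval : (M : ℕ) = a + k := rfl
        have hcard : (Finset.Icc a M).card = k + 1 := by
          rw [Fin.card_Icc]; omega
        have hR0 : ddR i a M P = 0 := by
          refine IH M b hMb _ ?_ ?_
          · have := ddR_totalDegree_le i hi a M P
            rw [hcard] at this
            simp only [Nat.add_sub_cancel] at this
            refine this.trans ?_
            have : (M : ℕ) = a + k := rfl
            omega
          · intro w hw hwin
            rw [ddR_eval]
            refine Finset.sum_eq_zero fun u hu => ?_
            rw [Finset.mem_Icc] at hu
            have hcons : (fun j => i (Fin.cons (α := fun _ => Fin q) u w j)) = Fin.cons (i u) (fun j => i (w j)) := by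
              funext j
              refine Fin.cases ?_ ?_ j <;> simp
            rw [← hcons, mul_eq_zero]; right
            refine hvan _ (mono_cons u w hw fun j => hu.2.trans (hwin j).1) ?_
            intro j
            refine Fin.cases ?_ ?_ j
            · simpa using ⟨hu.1, hu.2.trans hMb⟩
            · intro j'
              simpa using ⟨haM.trans (hwin j').1, (hwin j').2⟩
        have hrepr := (ddR_repr i a M P).symm.trans hR0
        rw [← hQ] at hrepr
        by_cases hkd : k ≤ Q.natDegree
        · have : ∑ k' ∈ Finset.range (Q.natDegree + 1),
              MvPolynomial.C (ddc i (Finset.Icc a M) k') * Q.coeff k' = Q.coeff k := by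
            rw [Finset.sum_eq_single k]
            · rw [show ddc i (Finset.Icc a M) k = 1 by
                have := ddR_dd_one i hi (Finset.Icc a M)
                  (Finset.nonempty_Icc.2 haM)
                rwa [hcard, Nat.add_sub_cancel] at this]
              simp
            · intro k' _ hne
              rcases lt_or_gt_of_ne hne with hlt | hgt
              · rw [ddR_dd_zero i hi _ _ (by omega)]; simp
              · rw [IHm k' (by omega), mul_zero]
            · intro hnot
              exact absurd (Finset.mem_range_succ_iff.2 hkd) hnot
          rw [this] at hrepr
          exact hrepr
        · exact Polynomial.coeff_eq_zero_of_natDegree_lt (by omega)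
    have hQ0 : Q = 0 := by
      ext k
      rw [key ((b : ℕ) - a + 1) k (by omega)]
      simp
    have : MvPolynomial.finSuccEquiv F n P = MvPolynomial.finSuccEquiv F n 0 := by
      rw [map_zero, ← hQ, hQ0]
    exact (MvPolynomial.finSuccEquiv F n).injective this

end
section
variable {F : Type*} [Field F] {q : ℕ}

lemma interp_degree (i : Fin q → F) (hi : Function.Injective i) :
    ∀ (n : ℕ) (a b : Fin q) (s : Fin (n+1) → Fin q), Monotone s →
      (∀ j, a ≤ s j ∧ s j ≤ b) →
      ∀ P : MvPolynomial (Fin (n+1)) F,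
        MvPolynomial.eval (fun j => i (s j)) P ≠ 0 →
        (∀ w : Fin (n+1) → Fin q, Monotone w → (∀ j, a ≤ w j ∧ w j ≤ b) → w ≠ s →
          MvPolynomial.eval (fun j => i (w j)) P = 0) →
        (b : ℕ) - (a : ℕ) ≤ P.totalDegree := by
  intro n
  induction n with
  | zero =>
    intro a b s hs hwin P hs0 hvan
    have hab : a ≤ b := (hwin 0).1.trans (hwin 0).2
    have hR : ddR i a b P ≠ 0 := by
      intro h0
      have := ddR_eval i a b P (fun j => j.elim0)
      rw [h0, map_zero] at this
      have hsum : ∑ u ∈ Finset.Icc a b, nodeC i (Finset.Icc a b) u *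
          (MvPolynomial.eval (Fin.cons (i u) fun j => j.elim0)) P =
          nodeC i (Finset.Icc a b) (s 0) * MvPolynomial.eval (fun j => i (s j)) P := by
        rw [Finset.sum_eq_single (s 0)]
        · have hfe : (Fin.cons (i (s 0)) fun j => j.elim0 : Fin 1 → F) = fun j => i (s j) := by
            funext j
            rw [Fin.eq_zero j]
            simp
          rw [hfe]
        · intro u hu hne
          rw [mul_eq_zero]; right
          have : (Fin.cons (i u) fun j => j.elim0 : Fin 1 → F) =
              fun j => i ((fun _ : Fin 1 => u) j) := by
            funext j
            rw [Fin.eq_zero j]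
            simp
          rw [this]
          refine hvan _ (fun x y _ => le_refl _) ?_ ?_
          · intro j
            exact Finset.mem_Icc.1 hu
          · intro h
            exact hne (by rw [← congrFun h 0])
        · intro hnot
          exact absurd (Finset.mem_Icc.2 (hwin 0)) hnot
      rw [hsum] at this
      rcases mul_eq_zero.1 this.symm with h | h
      · exact nodeC_ne_zero i hi _ _ h
      · exact hs0 h
    have hcard := ddR_ne_zero_card_le i hi a b P hR
    rw [Fin.card_Icc] at hcard
    have : (a : ℕ) ≤ b := hab
    omega
  | succ n IH =>
    intro a b s hs hwin P hs0 hvan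
    set M : Fin q := s 1 with hM
    have h01 : s 0 ≤ M := hs (by simp [Fin.le_def])
    have haM : a ≤ M := (hwin 0).1.trans h01
    have hMb : M ≤ b := (hwin 1).2
    set s' : Fin (n+1) → Fin q := Fin.tail s with hs'
    have hs'mono : Monotone s' := hs.comp (Fin.strictMono_succ).monotone
    have hMs' : ∀ j, M ≤ s' j := fun j => hs (by
      simp only [Fin.le_def, Fin.val_one]
      exact Nat.one_le_iff_ne_zero.2 (by simp [Fin.val_succ]))
    -- key evaluation computation, for any tail w' with M ≤ w' j ≤ b
    have heval : ∀ w' : Fin (n+1) → Fin q, Monotone w' → (∀ j, M ≤ w' j ∧ w' j ≤ b) →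
        MvPolynomial.eval (fun j => i (w' j)) (ddR i a M P) =
          ∑ u ∈ Finset.Icc a M, nodeC i (Finset.Icc a M) u *
            MvPolynomial.eval (fun j => i (Fin.cons (α := fun _ => Fin q) u w' j)) P := by
      intro w' hw' hwin'
      rw [ddR_eval]
      refine Finset.sum_congr rfl fun u hu => ?_
      have hfe : (Fin.cons (i u) fun j => i (w' j) : Fin (n+1+1) → F) =
          fun j => i (Fin.cons (α := fun _ => Fin q) u w' j) := by
        funext j
        refine Fin.cases ?_ ?_ j <;> simp
      rw [hfe]
    have hconsprop : ∀ (u : Fin q), u ∈ Finset.Icc a M →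
        ∀ w' : Fin (n+1) → Fin q, Monotone w' → (∀ j, M ≤ w' j ∧ w' j ≤ b) →
        Monotone (Fin.cons (α := fun _ => Fin q) u w') ∧
        (∀ j, a ≤ Fin.cons (α := fun _ => Fin q) u w' j ∧
          Fin.cons (α := fun _ => Fin q) u w' j ≤ b) := by
      intro u hu w' hw' hwin'
      rw [Finset.mem_Icc] at hu
      constructor
      · exact mono_cons u w' hw' fun j => hu.2.trans (hwin' j).1
      · intro j
        refine Fin.cases ?_ ?_ j
        · exact ⟨hu.1, hu.2.trans hMb⟩
        · intro j'
          exact ⟨haM.trans (hwin' j').1, (hwin' j').2⟩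
    have hRs' : MvPolynomial.eval (fun j => i (s' j)) (ddR i a M P) =
        nodeC i (Finset.Icc a M) (s 0) * MvPolynomial.eval (fun j => i (s j)) P := by
      rw [heval s' hs'mono (fun j => ⟨hMs' j, (hwin j.succ).2⟩)]
      rw [Finset.sum_eq_single (s 0)]
      · rw [Fin.cons_self_tail]
      · intro u hu hne
        rw [mul_eq_zero]; right
        obtain ⟨hm, hw⟩ := hconsprop u hu s' hs'mono (fun j => ⟨hMs' j, (hwin j.succ).2⟩)
        refine hvan _ hm hw ?_
        intro h
        exact hne (by rw [← congrFun h 0]; simp)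
      · intro hnot
        exact absurd (Finset.mem_Icc.2 ⟨(hwin 0).1, h01⟩) hnot
    have hRne : ddR i a M P ≠ 0 := by
      intro h0
      rw [h0, map_zero] at hRs'
      rcases mul_eq_zero.1 hRs'.symm with h | h
      · exact nodeC_ne_zero i hi _ _ h
      · exact hs0 h
    have hIH : (b : ℕ) - (M : ℕ) ≤ (ddR i a M P).totalDegree := by
      refine IH M b s' hs'mono (fun j => ⟨hMs' j, (hwin j.succ).2⟩) _ ?_ ?_
      · rw [hRs']
        exact mul_ne_zero (nodeC_ne_zero i hi _ _) hs0
      · intro w' hw' hwin' hne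
        rw [heval w' hw' hwin']
        refine Finset.sum_eq_zero fun u hu => ?_
        rw [mul_eq_zero]; right
        obtain ⟨hm, hw⟩ := hconsprop u hu w' hw' hwin'
        refine hvan _ hm hw ?_
        intro h
        apply hne
        have := congrArg Fin.tail h
        rwa [Fin.tail_cons] at this
    have hdegR := ddR_totalDegree_le i hi a M P
    have hcardP := ddR_ne_zero_card_le i hi a M P hRne
    rw [Fin.card_Icc] at hdegR hcardP
    have h1 : (a : ℕ) ≤ M := haM
    have h2 : (M : ℕ) ≤ b := hMb
    omega

end
noncomputable section
variable {F : Type*} [Field F] {q n : ℕ} [NeZero q]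

/-- lower endpoints for the triangular product polynomial -/
def lo (s : Fin n → Fin q) : Fin n → Fin q :=
  fun j => if h : (j : ℕ) = 0 then 0
    else s ⟨(j : ℕ) - 1, lt_of_le_of_lt (Nat.sub_le _ _) j.isLt⟩

/-- the triangular product polynomial -/
def Qs (i : Fin q → F) (s : Fin n → Fin q) : MvPolynomial (Fin n) F :=
  ∏ j : Fin n, ∏ u ∈ Finset.Ico (lo s j) (s j), (MvPolynomial.X j - MvPolynomial.C (i u))

lemma Qs_eval (i : Fin q → F) (s w : Fin n → Fin q) :
    MvPolynomial.eval (fun j => i (w j)) (Qs i s) =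
      ∏ j : Fin n, ∏ u ∈ Finset.Ico (lo s j) (s j), (i (w j) - i u) := by
  rw [Qs, map_prod]
  exact Finset.prod_congr rfl fun j _ => by rw [map_prod]; simp

lemma tele_sum {m : ℕ} (g : Fin (m+1) → Fin q) (hg : Monotone g) :
    ∑ j : Fin (m+1), ((g j : ℕ) - (lo g j : ℕ)) ≤ (g (Fin.last m) : ℕ) := by
  induction m with
  | zero =>
    rw [Fin.sum_univ_one]
    have : lo g 0 = 0 := by simp [lo]
    rw [this]
    have : (Fin.last 0) = 0 := rfl
    rw [this]
    simp
  | succ m IH =>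
    rw [Fin.sum_univ_castSucc]
    have hlo : ∀ j : Fin (m+1), lo g j.castSucc = lo (g ∘ Fin.castSucc) j := by
      intro j
      simp only [lo, Fin.coe_castSucc, Function.comp]
      split_ifs with h
      · rfl
      · exact congrArg g (Fin.ext (by simp))
    have h1 : ∑ j : Fin (m+1), ((g j.castSucc : ℕ) - (lo g j.castSucc : ℕ)) ≤
        ((g ∘ Fin.castSucc) (Fin.last m) : ℕ) := by
      rw [Finset.sum_congr rfl fun j _ => by rw [hlo j]]
      exact IH (g ∘ Fin.castSucc) (hg.comp Fin.strictMono_castSucc.monotone)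
    have h2 : lo g (Fin.last (m+1)) = g (Fin.last m).castSucc := by
      simp only [lo, Fin.val_last]
      rw [dif_neg (by omega)]
      exact congrArg g (Fin.ext (by simp))
    rw [h2]
    have h3 : (g (Fin.last m).castSucc : ℕ) ≤ (g (Fin.last (m+1)) : ℕ) :=
      hg (Fin.castSucc_lt_last _).le
    have h4 : ((g ∘ Fin.castSucc) (Fin.last m) : ℕ) = (g (Fin.last m).castSucc : ℕ) := rfl
    omega

lemma Qs_totalDegree (i : Fin q → F) (s : Fin n → Fin q) (hs : Monotone s) :
    (Qs i s).totalDegree ≤ q - 1 := by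
  have hstep : (Qs i s).totalDegree ≤ ∑ j : Fin n, ((s j : ℕ) - (lo s j : ℕ)) := by
    refine (MvPolynomial.totalDegree_finset_prod _ _).trans ?_
    refine Finset.sum_le_sum fun j _ => ?_
    refine (MvPolynomial.totalDegree_finset_prod _ _).trans ?_
    rw [← Fin.card_Ico (lo s j) (s j)]
    rw [Finset.card_eq_sum_ones]
    refine Finset.sum_le_sum fun u _ => ?_
    refine (MvPolynomial.totalDegree_sub _ _).trans ?_
    simp [MvPolynomial.totalDegree_X, MvPolynomial.totalDegree_C]
  cases n with
  | zero => simpa using hstep.trans (by simp)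
  | succ m =>
    refine hstep.trans ((tele_sum s hs).trans ?_)
    have := (s (Fin.last m)).isLt
    omega

lemma Qs_eval_self_ne_zero (i : Fin q → F) (hi : Function.Injective i)
    (s : Fin n → Fin q) :
    MvPolynomial.eval (fun j => i (s j)) (Qs i s) ≠ 0 := by
  rw [Qs_eval]
  refine Finset.prod_ne_zero_iff.2 fun j _ => Finset.prod_ne_zero_iff.2 fun u hu => ?_
  rw [Finset.mem_Ico] at hu
  exact sub_ne_zero.2 fun h => ne_of_gt hu.2 (hi h)

lemma Qs_eval_zero (i : Fin q → F) (s w : Fin n → Fin q) (hw : Monotone w)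
    (h : ¬ s ≤ w) :
    MvPolynomial.eval (fun j => i (w j)) (Qs i s) = 0 := by
  rw [Qs_eval]
  have hne : (Finset.univ.filter (fun j => w j < s j)).Nonempty := by
    rw [Pi.le_def] at h
    push_neg at h
    obtain ⟨j, hj⟩ := h
    exact ⟨j, Finset.mem_filter.2 ⟨Finset.mem_univ _, hj⟩⟩
  set j0 := (Finset.univ.filter (fun j => w j < s j)).min' hne with hj0
  have hj0mem := (Finset.univ.filter (fun j => w j < s j)).min'_mem hne
  rw [Finset.mem_filter] at hj0mem
  have hj0lt : w j0 < s j0 := hj0mem.2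
  have hj0min : ∀ x, w x < s x → j0 ≤ x := fun x hx =>
    Finset.min'_le _ _ (by simp [hx])
  have hlo : lo s j0 ≤ w j0 := by
    cases n with
    | zero => exact j0.elim0
    | succ m =>
      rcases Fin.eq_zero_or_eq_succ j0 with hz | ⟨k, hk⟩
      · rw [hz]
        have : lo s 0 = 0 := by simp [lo]
        rw [this]
        exact Fin.zero_le _
      · rw [hk]
        have : lo s k.succ = s k.castSucc := by
          simp only [lo, Fin.val_succ]
          rw [dif_neg (by omega)]
          exact congrArg s (Fin.ext (by simp))
        rw [this]
        have h1 : ¬ (w k.castSucc < s k.castSucc) := fun hcon =>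
          absurd (hj0min _ hcon) (by rw [hk]; exact not_le.2 (Fin.castSucc_lt_succ (i := k)))
        have h2 : w k.castSucc ≤ w k.succ := hw (Fin.castSucc_lt_succ (i := k)).le
        exact le_trans (not_lt.1 h1) h2
  refine Finset.prod_eq_zero (Finset.mem_univ j0) ?_
  refine Finset.prod_eq_zero (Finset.mem_Ico.2 ⟨hlo, hj0lt⟩) ?_
  exact sub_self _

lemma interp_exists (i : Fin q → F) (hi : Function.Injective i) (n : ℕ) :
    ∀ s : Fin n → Fin q, Monotone s →
      ∃ P : MvPolynomial (Fin n) F, P.totalDegree ≤ q - 1 ∧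
        MvPolynomial.eval (fun j => i (s j)) P = 1 ∧
        ∀ w : Fin n → Fin q, Monotone w → w ≠ s →
          MvPolynomial.eval (fun j => i (w j)) P = 0 := by
  classical
  suffices key : ∀ m : ℕ, ∀ s : Fin n → Fin q, Monotone s →
      (∑ j, (q - 1 - (s j : ℕ))) = m →
      ∃ P : MvPolynomial (Fin n) F, P.totalDegree ≤ q - 1 ∧
        MvPolynomial.eval (fun j => i (s j)) P = 1 ∧
        ∀ w : Fin n → Fin q, Monotone w → w ≠ s →
          MvPolynomial.eval (fun j => i (w j)) P = 0 by
    exact fun s hs => key _ s hs rfl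
  intro m
  induction m using Nat.strong_induction_on with
  | _ m IH =>
    intro s hs hm
    set B := Finset.univ.filter
      (fun w : Fin n → Fin q => Monotone w ∧ s ≤ w ∧ w ≠ s) with hB
    have hBmem : ∀ w, w ∈ B ↔ Monotone w ∧ s ≤ w ∧ w ≠ s := by
      intro w
      rw [hB, Finset.mem_filter]
      simp
    have hBlt : ∀ w ∈ B, (∑ j, (q - 1 - (w j : ℕ))) < m := by
      intro w hw
      rw [hBmem] at hw
      obtain ⟨hwm, hle, hne⟩ := hw
      rw [← hm]
      obtain ⟨j0, hj0⟩ := Function.ne_iff.1 hne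
      have hj0' : (s j0 : ℕ) < (w j0 : ℕ) :=
        lt_of_le_of_ne (hle j0) (fun h => hj0 (Fin.ext h.symm))
      refine Finset.sum_lt_sum (fun j _ => ?_) ⟨j0, Finset.mem_univ _, ?_⟩
      · have := hle j
        rw [Fin.le_def] at this
        omega
      · have := (w j0).isLt
        omega
    have hPw : ∀ w ∈ B, ∃ Pw : MvPolynomial (Fin n) F, Pw.totalDegree ≤ q - 1 ∧
        MvPolynomial.eval (fun j => i (w j)) Pw = 1 ∧
        ∀ v : Fin n → Fin q, Monotone v → v ≠ w →
          MvPolynomial.eval (fun j => i (v j)) Pw = 0 :=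
      fun w hw => IH _ (hBlt w hw) w ((hBmem w).1 hw).1 rfl
    choose g hg1 hg2 hg3 using hPw
    set G : (Fin n → Fin q) → MvPolynomial (Fin n) F :=
      fun w => if h : w ∈ B then g w h else 0 with hG
    set c := MvPolynomial.eval (fun j => i (s j)) (Qs i s) with hc
    have hc0 : c ≠ 0 := Qs_eval_self_ne_zero i hi s
    refine ⟨MvPolynomial.C c⁻¹ * Qs i s -
      ∑ w ∈ B, MvPolynomial.C (c⁻¹ * MvPolynomial.eval (fun j => i (w j)) (Qs i s)) * G w,
      ?_, ?_, ?_⟩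
    · refine le_trans (MvPolynomial.totalDegree_sub _ _) (max_le ?_ ?_)
      · refine le_trans (MvPolynomial.totalDegree_mul _ _) ?_
        rw [MvPolynomial.totalDegree_C]
        simpa using Qs_totalDegree i s hs
      · refine MvPolynomial.totalDegree_finsetSum_le fun w hw => ?_
        refine le_trans (MvPolynomial.totalDegree_mul _ _) ?_
        rw [MvPolynomial.totalDegree_C]
        rw [hG]
        simp only [dif_pos hw]
        simpa using hg1 w hw
    · rw [map_sub, map_mul, MvPolynomial.eval_C, ← hc]
      rw [map_sum]
      have hz : ∀ w ∈ B, MvPolynomial.eval (fun j => i (s j))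
          (MvPolynomial.C (c⁻¹ * MvPolynomial.eval (fun j => i (w j)) (Qs i s)) * G w) = 0 := by
        intro w hw
        rw [map_mul, hG]
        simp only [dif_pos hw]
        rw [hg3 w hw s hs (Ne.symm ((hBmem w).1 hw).2.2), mul_zero]
      rw [Finset.sum_eq_zero hz, sub_zero, inv_mul_cancel₀ hc0]
    · intro v hv hvs
      rw [map_sub, map_mul, MvPolynomial.eval_C, map_sum]
      by_cases hvB : v ∈ B
      · have hsum : ∑ w ∈ B, MvPolynomial.eval (fun j => i (v j))
            (MvPolynomial.C (c⁻¹ * MvPolynomial.eval (fun j => i (w j)) (Qs i s)) * G w) =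
            c⁻¹ * MvPolynomial.eval (fun j => i (v j)) (Qs i s) := by
          rw [Finset.sum_eq_single v]
          · rw [map_mul, MvPolynomial.eval_C, hG]
            simp only [dif_pos hvB]
            rw [hg2 v hvB, mul_one]
          · intro w hw hne
            rw [map_mul, hG]
            simp only [dif_pos hw]
            rw [hg3 w hw v hv (fun h => hne (h ▸ rfl)), mul_zero]
          · intro hnot
            exact absurd hvB hnot
        rw [hsum]
        ring
      · have hnle : ¬ s ≤ v := by
          intro hle
          exact hvB ((hBmem v).2 ⟨hv, hle, hvs⟩)
        rw [Qs_eval_zero i s v hv hnle, mul_zero]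
        have hz : ∀ w ∈ B, MvPolynomial.eval (fun j => i (v j))
            (MvPolynomial.C (c⁻¹ * MvPolynomial.eval (fun j => i (w j)) (Qs i s)) * G w) = 0 := by
          intro w hw
          rw [map_mul, hG]
          simp only [dif_pos hw]
          rw [hg3 w hw v hv (fun h => hvB (h ▸ hw)), mul_zero]
        rw [Finset.sum_eq_zero hz, sub_zero]

end
theorem stmt_9 {F : Type*} [Field F] (n q : ℕ) (hn : 1 ≤ n) (hq : 1 ≤ q)
    (i : Fin q → F) (hi : Function.Injective i)
    (s : Fin n → Fin q) (hs : Monotone s) :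
    (∃! P : MvPolynomial (Fin n) F, P.totalDegree ≤ q - 1 ∧
      MvPolynomial.eval (fun j => i (s j)) P = 1 ∧
      ∀ w : Fin n → Fin q, Monotone w → w ≠ s →
        MvPolynomial.eval (fun j => i (w j)) P = 0) ∧
    (∀ P : MvPolynomial (Fin n) F,
      MvPolynomial.eval (fun j => i (s j)) P = 1 →
      (∀ w : Fin n → Fin q, Monotone w → w ≠ s →
        MvPolynomial.eval (fun j => i (w j)) P = 0) →
      q - 1 ≤ P.totalDegree) := by
  haveI : NeZero q := ⟨by omega⟩
  have hb : q - 1 < q := by omega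
  set b : Fin q := ⟨q - 1, hb⟩ with hbdef
  have hzval : ((0 : Fin q) : ℕ) = 0 := Fin.val_zero q
  have hbval : (b : ℕ) = q - 1 := rfl
  have hwin : ∀ w : Fin n → Fin q, ∀ j, (0 : Fin q) ≤ w j ∧ w j ≤ b := by
    intro w j
    refine ⟨Fin.zero_le _, ?_⟩
    rw [Fin.le_def, hbval]
    have := (w j).isLt
    omega
  constructor
  · obtain ⟨P, hdeg, h1, h0⟩ := interp_exists i hi n s hs
    refine ⟨P, ⟨hdeg, h1, h0⟩, ?_⟩
    rintro P' ⟨hdeg', h1', h0'⟩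
    have hz : P' - P = 0 := by
      refine interp_unique i hi n 0 b (Fin.zero_le _) _ ?_ ?_
      · refine le_trans (MvPolynomial.totalDegree_sub _ _) ?_
        rw [hbval, hzval]
        simpa using max_le hdeg' hdeg
      · intro w hw _
        rw [map_sub]
        by_cases hws : w = s
        · subst hws
          rw [h1', h1, sub_self]
        · rw [h0' w hw hws, h0 w hw hws, sub_self]
    exact sub_eq_zero.1 hz
  · intro P h1 h0
    obtain ⟨n', rfl⟩ := Nat.exists_eq_succ_of_ne_zero (by omega : n ≠ 0)
    have := interp_degree i hi n' 0 b s hs (fun j => hwin s j) P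
      (by rw [h1]; exact one_ne_zero) (fun w hw _ hne => h0 w hw hne)
    rw [hbval, hzval] at this
    omega
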